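/- Let a > b > 0. For the simple billiard 4-periodic family in the ellipse x²/a² + y²/b² = 1, the product of the area A of the 4-periodic and the area A' of its outer polygon (the tangential polygon whose sides touch the ellipse at the four vertices) is constant and equals 8a²b². In particular, with P₁ = (x₁, y₁) on the ellipse and vertices as in the standard parametrization, A·A' = 8a²b² independent of P₁. -/

import Mathlib

set_option maxHeartbeats 1000000

/-- Unsigned shoelace area of a quadrilateral. -/
noncomputable def quadArea (P1 P2 P3 P4 : ℝ × ℝ) : ℝ :=
  |(P1.1*(P2.2 - P4.2) + P2.1*(P3.2 - P1.2) + P3.1*(P4.2 - P2.2)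
      + P4.1*(P1.2 - P3.2))| / 2

/-- `q` lies on the tangent line to the ellipse `x²/a² + y²/b² = 1` at the point
`p` of the ellipse. -/
def OnTangentLine (a b : ℝ) (p q : ℝ × ℝ) : Prop :=
  q.1 * p.1 / a^2 + q.2 * p.2 / b^2 = 1

/-- For simple billiard 4-periodics, the product of the area `A` of the
4-periodic and the area `A'` of its outer (tangential) polygon is the constant
`8a²b²`, independent of the initial vertex. -/
theorem simple_4periodic_area_product (a b x₁ y₁ : ℝ) (hab : a > b) (hb : b > 0)
    (hP1 : (x₁/a)^2 + (y₁/b)^2 = 1) (Q1 Q2 Q3 Q4 : ℝ × ℝ) :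
    let q := Real.sqrt (b^6*x₁^2 + a^6*y₁^2)
    let P1 : ℝ × ℝ := (x₁, y₁)
    let P2 : ℝ × ℝ := (-(a^4*y₁)/q, (b^4*x₁)/q)
    let P3 : ℝ × ℝ := (-x₁, -y₁)
    let P4 : ℝ × ℝ := ((a^4*y₁)/q, -(b^4*x₁)/q)
    -- each outer vertex is the intersection of consecutive tangent lines
    OnTangentLine a b P1 Q1 → OnTangentLine a b P2 Q1 →
    OnTangentLine a b P2 Q2 → OnTangentLine a b P3 Q2 →
    OnTangentLine a b P3 Q3 → OnTangentLine a b P4 Q3 →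
    OnTangentLine a b P4 Q4 → OnTangentLine a b P1 Q4 →
    quadArea P1 P2 P3 P4 * quadArea Q1 Q2 Q3 Q4 = 8*a^2*b^2 := by
  intro q P1 P2 P3 P4 h11 h21 h22 h32 h33 h43 h44 h14
  have ha : (0:ℝ) < a := lt_trans hb hab
  have ha0 : a ≠ 0 := ne_of_gt ha
  have hb0 : b ≠ 0 := ne_of_gt hb
  -- ellipse relation cleared of denominators
  have hE : b^2*x₁^2 + a^2*y₁^2 = a^2*b^2 := by
    field_simp at hP1; nlinarith [hP1]
  have h44' : (0:ℝ) ≤ a^4 - b^4 := by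
    have := pow_le_pow_left₀ hb.le hab.le 4; linarith
  have h22' : (0:ℝ) ≤ a^2 - b^2 := by
    have := pow_le_pow_left₀ hb.le hab.le 2; linarith
  -- positivity of q
  have key6 : (0:ℝ) < b^4*(b^2*x₁^2 + a^2*y₁^2) := by rw [hE]; positivity
  have haux6 : (0:ℝ) ≤ a^2*(a^4 - b^4)*y₁^2 :=
    mul_nonneg (mul_nonneg (sq_nonneg a) h44') (sq_nonneg y₁)
  have hqsq : (0:ℝ) < b^6*x₁^2 + a^6*y₁^2 := by nlinarith [key6, haux6]
  have hq : (0:ℝ) < q := Real.sqrt_pos.mpr hqsq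
  have hq0 : q ≠ 0 := ne_of_gt hq
  set F : ℝ := b^4*x₁^2 + a^4*y₁^2 with hFdef
  have key4 : (0:ℝ) < b^2*(b^2*x₁^2 + a^2*y₁^2) := by rw [hE]; positivity
  have haux4 : (0:ℝ) ≤ a^2*(a^2 - b^2)*y₁^2 :=
    mul_nonneg (mul_nonneg (sq_nonneg a) h22') (sq_nonneg y₁)
  have hF : (0:ℝ) < F := by rw [hFdef]; nlinarith [key4, haux4]
  have hF0 : F ≠ 0 := ne_of_gt hF
  -- clear denominators in the tangency conditions
  simp only [OnTangentLine, P1, P2, P3, P4] at h11 h21 h22 h32 h33 h43 h44 h14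
  have e11 : Q1.1*x₁*b^2 + Q1.2*y₁*a^2 = a^2*b^2 := by field_simp at h11; linarith
  have e32 : Q2.1*x₁*b^2 + Q2.2*y₁*a^2 = -(a^2*b^2) := by field_simp at h32; linarith
  have e33 : Q3.1*x₁*b^2 + Q3.2*y₁*a^2 = -(a^2*b^2) := by field_simp at h33; linarith
  have e14 : Q4.1*x₁*b^2 + Q4.2*y₁*a^2 = a^2*b^2 := by field_simp at h14; linarith
  have e21 : -(a^2*y₁)*Q1.1 + b^2*x₁*Q1.2 = q := by
    field_simp at h21
    have h : (-(a^2*y₁)*Q1.1 + b^2*x₁*Q1.2) * (q*a^2*b^2) = q * (q*a^2*b^2) := by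
      linear_combination (q*a^2*b^2) * h21
    exact mul_right_cancel₀ (by positivity) h
  have e22 : -(a^2*y₁)*Q2.1 + b^2*x₁*Q2.2 = q := by
    field_simp at h22
    have h : (-(a^2*y₁)*Q2.1 + b^2*x₁*Q2.2) * (q*a^2*b^2) = q * (q*a^2*b^2) := by
      linear_combination (q*a^2*b^2) * h22
    exact mul_right_cancel₀ (by positivity) h
  have e43 : -(a^2*y₁)*Q3.1 + b^2*x₁*Q3.2 = -q := by
    field_simp at h43
    have h : (-(a^2*y₁)*Q3.1 + b^2*x₁*Q3.2) * (q*a^2*b^2) = -q * (q*a^2*b^2) := by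
      linear_combination -(q*a^2*b^2) * h43
    exact mul_right_cancel₀ (by positivity) h
  have e44 : -(a^2*y₁)*Q4.1 + b^2*x₁*Q4.2 = -q := by
    field_simp at h44
    have h : (-(a^2*y₁)*Q4.1 + b^2*x₁*Q4.2) * (q*a^2*b^2) = -q * (q*a^2*b^2) := by
      linear_combination -(q*a^2*b^2) * h44
    exact mul_right_cancel₀ (by positivity) h
  -- solve for the outer vertices
  have q1x : Q1.1 * F = a^2*(b^4*x₁ - q*y₁) := by
    rw [hFdef]; linear_combination (b^2*x₁) * e11 - (a^2*y₁) * e21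
  have q1y : Q1.2 * F = b^2*(q*x₁ + a^4*y₁) := by
    rw [hFdef]; linear_combination (a^2*y₁) * e11 + (b^2*x₁) * e21
  have q2x : Q2.1 * F = -(a^2*(b^4*x₁ + q*y₁)) := by
    rw [hFdef]; linear_combination (b^2*x₁) * e32 - (a^2*y₁) * e22
  have q2y : Q2.2 * F = b^2*(q*x₁ - a^4*y₁) := by
    rw [hFdef]; linear_combination (a^2*y₁) * e32 + (b^2*x₁) * e22
  have q3x : Q3.1 * F = -(a^2*(b^4*x₁ - q*y₁)) := by
    rw [hFdef]; linear_combination (b^2*x₁) * e33 - (a^2*y₁) * e43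
  have q3y : Q3.2 * F = -(b^2*(q*x₁ + a^4*y₁)) := by
    rw [hFdef]; linear_combination (a^2*y₁) * e33 + (b^2*x₁) * e43
  have q4x : Q4.1 * F = a^2*(b^4*x₁ + q*y₁) := by
    rw [hFdef]; linear_combination (b^2*x₁) * e14 - (a^2*y₁) * e44
  have q4y : Q4.2 * F = -(b^2*(q*x₁ - a^4*y₁)) := by
    rw [hFdef]; linear_combination (a^2*y₁) * e14 + (b^2*x₁) * e44
  have hQ1x : Q1.1 = a^2*(b^4*x₁ - q*y₁)/F := (eq_div_iff hF0).mpr q1x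
  have hQ1y : Q1.2 = b^2*(q*x₁ + a^4*y₁)/F := (eq_div_iff hF0).mpr q1y
  have hQ2x : Q2.1 = -(a^2*(b^4*x₁ + q*y₁))/F := (eq_div_iff hF0).mpr q2x
  have hQ2y : Q2.2 = b^2*(q*x₁ - a^4*y₁)/F := (eq_div_iff hF0).mpr q2y
  have hQ3x : Q3.1 = -(a^2*(b^4*x₁ - q*y₁))/F := (eq_div_iff hF0).mpr q3x
  have hQ3y : Q3.2 = -(b^2*(q*x₁ + a^4*y₁))/F := (eq_div_iff hF0).mpr q3y
  have hQ4x : Q4.1 = a^2*(b^4*x₁ + q*y₁)/F := (eq_div_iff hF0).mpr q4x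
  have hQ4y : Q4.2 = -(b^2*(q*x₁ - a^4*y₁))/F := (eq_div_iff hF0).mpr q4y
  -- inner area
  have hA : quadArea P1 P2 P3 P4 = 2*F/q := by
    simp only [quadArea, P1, P2, P3, P4]
    have hS : x₁*((b^4*x₁)/q - -(b^4*x₁)/q) + (-(a^4*y₁)/q)*(-y₁ - y₁)
        + (-x₁)*(-(b^4*x₁)/q - (b^4*x₁)/q) + ((a^4*y₁)/q)*(y₁ - -y₁) = 4*F/q := by
      rw [hFdef]; field_simp; ring
    rw [hS, abs_of_pos (by positivity)]
    ring
  -- outer area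
  have hA' : quadArea Q1 Q2 Q3 Q4 = 4*a^2*b^2*q/F := by
    simp only [quadArea]
    have hS : Q1.1*(Q2.2 - Q4.2) + Q2.1*(Q3.2 - Q1.2) + Q3.1*(Q4.2 - Q2.2)
        + Q4.1*(Q1.2 - Q3.2) = 8*a^2*b^2*q/F := by
      rw [hQ1x, hQ1y, hQ2x, hQ2y, hQ3x, hQ3y, hQ4x, hQ4y]
      field_simp
      ring
    rw [hS, abs_of_pos (by positivity)]
    ring
  rw [hA, hA']
  field_simp
  ring
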